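/- If X is a standard Gaussian random variable (mean 0, variance 1) and f : ℝ → ℝ is Lipschitz (hence absolutely continuous with bounded derivative), then E[f'(X)] = E[X·f(X)]. -/

import Mathlib

open MeasureTheory ProbabilityTheory

section SteinAux

open Real Filter Set intervalIntegral
open scoped NNReal ENNReal

noncomputable def steinPhi (x : ℝ) : ℝ := (Real.sqrt (2 * Real.pi))⁻¹ * Real.exp (-x ^ 2 / 2)

lemma steinPhi_eq_pdf : gaussianPDFReal 0 1 = steinPhi := by
  ext x
  simp [gaussianPDFReal, steinPhi]

lemma steinPhi_nonneg (x : ℝ) : 0 ≤ steinPhi x := by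
  unfold steinPhi; positivity

lemma steinPhi_hasDeriv (x : ℝ) : HasDerivAt steinPhi (-x * steinPhi x) x := by
  have h1 : HasDerivAt (fun x : ℝ => -x ^ 2 / 2) (-x) x := by
    have := ((hasDerivAt_pow 2 x).neg).div_const 2
    simpa using this.congr_deriv (by ring)
  have h2 := (h1.exp).const_mul (Real.sqrt (2 * Real.pi))⁻¹
  unfold steinPhi
  exact h2.congr_deriv (by ring)

lemma steinPhi_tendsto_seq :
    True := trivial

lemma seq_tendsto_punctured (c : ℝ) :
    Tendsto (fun n : ℕ => c + ((n : ℝ) + 1)⁻¹) atTop (nhdsWithin c {c}ᶜ) := by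
  have h0 : Tendsto (fun n : ℕ => ((n : ℝ) + 1)⁻¹) atTop (nhds 0) := by
    exact tendsto_one_div_add_atTop_nhds_zero_nat.congr (by intro n; rw [one_div])
  refine tendsto_nhdsWithin_iff.mpr ⟨?_, ?_⟩
  · simpa using tendsto_const_nhds.add h0
  · filter_upwards with n
    have : (0:ℝ) < ((n : ℝ) + 1)⁻¹ := by positivity
    simp only [mem_compl_iff, mem_singleton_iff]
    intro h
    nlinarith [this]

lemma slope_tendsto_of_hasDerivAt {g : ℝ → ℝ} {c d : ℝ} (h : HasDerivAt g d c) :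
    Tendsto (fun n : ℕ => ((n : ℝ) + 1) * (g (c + ((n : ℝ) + 1)⁻¹) - g c)) atTop (nhds d) := by
  have hs := (hasDerivAt_iff_tendsto_slope.mp h).comp (seq_tendsto_punctured c)
  refine hs.congr fun n => ?_
  have hpos : (0:ℝ) < ((n : ℝ) + 1) := by positivity
  simp only [Function.comp, slope_def_field]
  rw [add_sub_cancel_left, div_eq_inv_mul, inv_inv]

lemma ftc_lipschitz_ae {g g' : ℝ → ℝ} (hg : Continuous g) {a b M : ℝ} (hab : a ≤ b)
    (hM : ∀ x ∈ Set.Icc a b, ∀ h : ℝ, 0 < h → h ≤ 1 → |g (x + h) - g x| ≤ M * h)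
    (hd : ∀ᵐ x ∂(volume : Measure ℝ), HasDerivAt g (g' x) x) :
    ∫ x in a..b, g' x = g b - g a := by
  set F : ℕ → ℝ → ℝ := fun n x => ((n : ℝ) + 1) * (g (x + ((n : ℝ) + 1)⁻¹) - g x) with hF
  -- limit of interval integrals of F n is the integral of g'
  have hDCT : Tendsto (fun n => ∫ x in a..b, F n x) atTop (nhds (∫ x in a..b, g' x)) := by
    apply intervalIntegral.tendsto_integral_filter_of_dominated_convergence (fun _ => M)
    · filter_upwards with n
      exact ((continuous_const.mul ((hg.comp (continuous_id.add continuous_const)).sub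
        hg)).aestronglyMeasurable)
    · filter_upwards with n
      filter_upwards with x hx
      rw [Set.uIoc_of_le hab] at hx
      have hx' : x ∈ Set.Icc a b := ⟨hx.1.le, hx.2⟩
      have hpos : (0:ℝ) < ((n : ℝ) + 1)⁻¹ := by positivity
      have hle1 : ((n : ℝ) + 1)⁻¹ ≤ 1 := by
        rw [inv_le_one_iff₀]; right; linarith [Nat.cast_nonneg (α := ℝ) n]
      have := hM x hx' _ hpos hle1
      have hpos' : (0:ℝ) < ((n : ℝ) + 1) := by positivity
      rw [hF]
      simp only [Real.norm_eq_abs, abs_mul, abs_of_pos hpos']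
      calc ((n : ℝ) + 1) * |g (x + ((n : ℝ) + 1)⁻¹) - g x|
          ≤ ((n : ℝ) + 1) * (M * ((n : ℝ) + 1)⁻¹) := by
            exact mul_le_mul_of_nonneg_left this hpos'.le
        _ = M := by field_simp
    · exact intervalIntegrable_const
    · filter_upwards [hd] with x hx _
      exact slope_tendsto_of_hasDerivAt hx
  -- limit of interval integrals of F n is g b - g a
  have hInt : ∀ (c : ℝ) (h : ℝ), IntervalIntegrable g volume c h := fun c h =>
    hg.intervalIntegrable c h
  have hbd : ∀ c : ℝ, Tendsto (fun n : ℕ => ((n:ℝ)+1) * ∫ x in c..(c + ((n:ℝ)+1)⁻¹), g x)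
      atTop (nhds (g c)) := by
    intro c
    have hFd : HasDerivAt (fun u => ∫ x in c..u, g x) (g c) c :=
      intervalIntegral.integral_hasDerivAt_right (hInt c c)
        (hg.stronglyMeasurable.stronglyMeasurableAtFilter) hg.continuousAt
    have := slope_tendsto_of_hasDerivAt hFd
    simpa using this
  have hcompute : ∀ n : ℕ, ∫ x in a..b, F n x =
      ((n:ℝ)+1) * (∫ x in b..(b + ((n:ℝ)+1)⁻¹), g x) -
      ((n:ℝ)+1) * (∫ x in a..(a + ((n:ℝ)+1)⁻¹), g x) := by
    intro n
    set c := ((n:ℝ)+1)⁻¹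
    have h1 : ∫ x in a..b, g (x + c) = ∫ x in (a+c)..(b+c), g x :=
      (intervalIntegral.integral_comp_add_right g c)
    have h2 : (∫ x in a..(a+c), g x) + ∫ x in (a+c)..(b+c), g x = ∫ x in a..(b+c), g x :=
      intervalIntegral.integral_add_adjacent_intervals (hInt _ _) (hInt _ _)
    have h3 : (∫ x in a..b, g x) + ∫ x in b..(b+c), g x = ∫ x in a..(b+c), g x :=
      intervalIntegral.integral_add_adjacent_intervals (hInt _ _) (hInt _ _)
    have h4 : ∫ x in a..b, F n x =
        ((n:ℝ)+1) * ((∫ x in a..b, g (x + c)) - ∫ x in a..b, g x) := by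
      rw [hF]
      simp only []
      have hc : Continuous fun x => g (x + c) := hg.comp (continuous_id.add continuous_const)
      rw [← intervalIntegral.integral_sub (hc.intervalIntegrable _ _) (hInt _ _),
        ← intervalIntegral.integral_const_mul]
    rw [h4, h1]
    have : (∫ x in (a+c)..(b+c), g x) - ∫ x in a..b, g x =
        (∫ x in b..(b+c), g x) - ∫ x in a..(a+c), g x := by linarith
    rw [this]; ring
  have hlim2 : Tendsto (fun n => ∫ x in a..b, F n x) atTop (nhds (g b - g a)) := by
    rw [funext hcompute]
    exact (hbd b).sub (hbd a)
  exact tendsto_nhds_unique hDCT hlim2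

lemma abs_mul_exp_le_one (x : ℝ) : |x| * Real.exp (-x ^ 2 / 2) ≤ 1 := by
  have h1 : 1 + x ^ 2 / 2 ≤ Real.exp (x ^ 2 / 2) := Real.add_one_le_exp (x ^ 2 / 2) |>.trans_eq' (by ring)
  have h2 : |x| ≤ 1 + x ^ 2 / 2 := by
    rcases abs_cases x with ⟨h, _⟩ | ⟨h, _⟩ <;> nlinarith [sq_nonneg (|x| - 1), sq_abs x]
  have h3 : Real.exp (-x ^ 2 / 2) = (Real.exp (x ^ 2 / 2))⁻¹ := by
    rw [← Real.exp_neg]; ring_nf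
  have h4 : (0:ℝ) < Real.exp (x ^ 2 / 2) := Real.exp_pos _
  rw [h3, mul_inv_le_iff₀ h4, one_mul]
  exact h2.trans h1

lemma steinPhi_le (x : ℝ) : steinPhi x ≤ (Real.sqrt (2 * Real.pi))⁻¹ := by
  unfold steinPhi
  have : Real.exp (-x ^ 2 / 2) ≤ 1 := by
    rw [Real.exp_le_one_iff]; nlinarith [sq_nonneg x]
  nlinarith [Real.sqrt_nonneg (2 * Real.pi), inv_nonneg.mpr (Real.sqrt_nonneg (2 * Real.pi))]

lemma abs_mul_steinPhi_le (x : ℝ) : |x| * steinPhi x ≤ (Real.sqrt (2 * Real.pi))⁻¹ := by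
  unfold steinPhi
  have h := abs_mul_exp_le_one x
  have h0 : (0:ℝ) ≤ (Real.sqrt (2 * Real.pi))⁻¹ := inv_nonneg.mpr (Real.sqrt_nonneg _)
  calc |x| * ((Real.sqrt (2 * Real.pi))⁻¹ * Real.exp (-x ^ 2 / 2))
      = (Real.sqrt (2 * Real.pi))⁻¹ * (|x| * Real.exp (-x ^ 2 / 2)) := by ring
    _ ≤ (Real.sqrt (2 * Real.pi))⁻¹ * 1 := by
        exact mul_le_mul_of_nonneg_left h h0
    _ = _ := mul_one _

lemma steinPhi_lipschitz : ∀ x y : ℝ, |steinPhi x - steinPhi y| ≤ (Real.sqrt (2 * Real.pi))⁻¹ * |x - y| := by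
  intro x y
  set C : ℝ≥0 := ⟨(Real.sqrt (2 * Real.pi))⁻¹, inv_nonneg.mpr (Real.sqrt_nonneg _)⟩ with hC
  have hdiff : Differentiable ℝ steinPhi := fun x => (steinPhi_hasDeriv x).differentiableAt
  have hlip : LipschitzWith C steinPhi := by
    apply lipschitzWith_of_nnnorm_deriv_le hdiff
    intro x
    rw [(steinPhi_hasDeriv x).deriv, ← NNReal.coe_le_coe, coe_nnnorm, hC]
    simp only [NNReal.coe_mk, Real.norm_eq_abs]
    rw [abs_mul, abs_neg]
    exact abs_mul_steinPhi_le x |>.trans_eq' (by rw [abs_of_nonneg (steinPhi_nonneg x)])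
  have := hlip.dist_le_mul x y
  rwa [Real.dist_eq, Real.dist_eq] at this

lemma lipschitz_hasDerivAt_bound {f : ℝ → ℝ} {K : ℝ≥0} (hf : LipschitzWith K f)
    {d x : ℝ} (h : HasDerivAt f d x) : |d| ≤ (K : ℝ) := by
  have hs := hasDerivAt_iff_tendsto_slope.mp h
  have habs : Tendsto (fun y => |slope f x y|) (nhdsWithin x {x}ᶜ) (nhds |d|) :=
    hs.abs
  refine le_of_tendsto habs ?_
  filter_upwards [self_mem_nhdsWithin] with y hy
  have hxy : y ≠ x := hy
  rw [slope_def_field, div_eq_inv_mul, abs_mul, abs_inv]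
  have h1 : |f y - f x| ≤ (K : ℝ) * |y - x| := by
    have := hf.dist_le_mul y x
    simpa [Real.dist_eq] using this
  have h2 : (0:ℝ) < |y - x| := by
    rw [abs_pos, sub_ne_zero]; exact hxy
  rw [inv_mul_le_iff₀ h2]
  linarith [h1]

lemma lipschitz_linear_growth {f : ℝ → ℝ} {K : ℝ≥0} (hf : LipschitzWith K f) (x : ℝ) :
    |f x| ≤ |f 0| + (K : ℝ) * |x| := by
  have := hf.dist_le_mul x 0
  rw [Real.dist_eq, Real.dist_eq] at this
  simp only [sub_zero] at this
  calc |f x| = |f 0 + (f x - f 0)| := by ring_nf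
    _ ≤ |f 0| + |f x - f 0| := abs_add_le _ _
    _ ≤ |f 0| + (K : ℝ) * |x| := by linarith

lemma decay_atTop (A B : ℝ) :
    Tendsto (fun x : ℝ => (A + B * x) * Real.exp (-x ^ 2 / 2)) atTop (nhds 0) := by
  have hlim : Tendsto (fun x : ℝ => |A| * Real.exp (-x) + |B| * (x * Real.exp (-x)))
      atTop (nhds 0) := by
    have h1 := Real.tendsto_exp_neg_atTop_nhds_zero.const_mul |A|
    have h2 := (Real.tendsto_pow_mul_exp_neg_atTop_nhds_zero 1).const_mul |B|
    simpa using h1.add h2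
  apply squeeze_zero_norm' _ hlim
  filter_upwards [eventually_ge_atTop (2 : ℝ)] with x hx
  have hxpos : (0:ℝ) < x := by linarith
  have hexp : Real.exp (-x ^ 2 / 2) ≤ Real.exp (-x) := by
    apply Real.exp_le_exp.mpr; nlinarith
  have hnn : (0:ℝ) ≤ Real.exp (-x ^ 2 / 2) := (Real.exp_pos _).le
  rw [Real.norm_eq_abs, abs_mul, abs_of_nonneg hnn]
  have hA : |A + B * x| ≤ |A| + |B| * x := by
    calc |A + B * x| ≤ |A| + |B * x| := abs_add_le _ _
      _ = |A| + |B| * x := by rw [abs_mul, abs_of_pos hxpos]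
  have hBx : (0:ℝ) ≤ |A| + |B| * x := by positivity
  calc |A + B * x| * Real.exp (-x ^ 2 / 2)
      ≤ (|A| + |B| * x) * Real.exp (-x) := by
        apply mul_le_mul hA hexp hnn hBx
    _ = |A| * Real.exp (-x) + |B| * (x * Real.exp (-x)) := by ring

lemma fphi_tendsto_atTop {f : ℝ → ℝ} {K : ℝ≥0} (hf : LipschitzWith K f) :
    Tendsto (fun x : ℝ => f x * steinPhi x) atTop (nhds 0) := by
  have hlim := (decay_atTop (|f 0|) (K : ℝ)).const_mul (Real.sqrt (2 * Real.pi))⁻¹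
  rw [mul_zero] at hlim
  apply squeeze_zero_norm' _ hlim
  filter_upwards [eventually_ge_atTop (0 : ℝ)] with x hx
  have h1 : |f x| ≤ |f 0| + (K : ℝ) * |x| := lipschitz_linear_growth hf x
  have h2 : (0:ℝ) ≤ Real.exp (-x ^ 2 / 2) := (Real.exp_pos _).le
  have h3 : (0:ℝ) ≤ (Real.sqrt (2 * Real.pi))⁻¹ := inv_nonneg.mpr (Real.sqrt_nonneg _)
  rw [Real.norm_eq_abs, abs_mul]
  have h4 : |steinPhi x| = (Real.sqrt (2 * Real.pi))⁻¹ * Real.exp (-x ^ 2 / 2) := by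
    rw [abs_of_nonneg (steinPhi_nonneg x)]; rfl
  rw [h4, abs_of_nonneg hx] at *
  calc |f x| * ((Real.sqrt (2 * Real.pi))⁻¹ * Real.exp (-x ^ 2 / 2))
      ≤ (|f 0| + (K:ℝ) * x) * ((Real.sqrt (2 * Real.pi))⁻¹ * Real.exp (-x ^ 2 / 2)) := by
        apply mul_le_mul_of_nonneg_right h1 (by positivity)
    _ = (Real.sqrt (2 * Real.pi))⁻¹ * ((|f 0| + (K:ℝ) * x) * Real.exp (-x ^ 2 / 2)) := by ring

lemma fphi_tendsto_seq {f : ℝ → ℝ} {K : ℝ≥0} (hf : LipschitzWith K f) :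
    Tendsto (fun n : ℕ => f (n : ℝ) * steinPhi (n : ℝ) - f (-(n : ℝ)) * steinPhi (-(n : ℝ)))
      atTop (nhds 0) := by
  have hnat : Tendsto (fun n : ℕ => (n : ℝ)) atTop atTop := tendsto_natCast_atTop_atTop
  have h1 : Tendsto (fun n : ℕ => f (n : ℝ) * steinPhi (n : ℝ)) atTop (nhds 0) :=
    (fphi_tendsto_atTop hf).comp hnat
  have hneg : LipschitzWith K (fun x : ℝ => f (-x)) := by
    have := hf.comp LipschitzWith.id.neg
    simpa [Function.comp_def] using this
  have h2' : Tendsto (fun x : ℝ => f (-x) * steinPhi (-x)) atTop (nhds 0) := by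
    have := fphi_tendsto_atTop hneg
    refine this.congr fun x => ?_
    have : steinPhi (-x) = steinPhi x := by unfold steinPhi; rw [neg_pow]; ring_nf
    rw [this]
  have h2 : Tendsto (fun n : ℕ => f (-(n : ℝ)) * steinPhi (-(n : ℝ))) atTop (nhds 0) :=
    h2'.comp hnat
  simpa using h1.sub h2

lemma integrable_steinPhi : Integrable steinPhi := by
  rw [← steinPhi_eq_pdf]
  exact integrable_gaussianPDFReal 0 1

lemma integrable_sq_steinPhi : Integrable (fun x : ℝ => x ^ 2 * steinPhi x) := by
  have h := (integrable_rpow_mul_exp_neg_mul_sq (b := 1/2) (by norm_num)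
    (s := 2) (by norm_num)).const_mul (Real.sqrt (2 * Real.pi))⁻¹
  refine h.congr (Eventually.of_forall fun x => ?_)
  simp only [Real.rpow_two, steinPhi]
  ring_nf

lemma integrable_abs_steinPhi : Integrable (fun x : ℝ => |x| * steinPhi x) := by
  refine (integrable_steinPhi.add integrable_sq_steinPhi).mono' ?_ ?_
  · exact ((continuous_abs.mul (by unfold steinPhi; continuity)).aestronglyMeasurable)
  · filter_upwards with x
    have h1 : |x| ≤ 1 + x ^ 2 := by nlinarith [sq_nonneg (|x| - 1), sq_abs x]
    have h2 : 0 ≤ steinPhi x := steinPhi_nonneg x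
    rw [Real.norm_eq_abs, abs_of_nonneg (by positivity)]
    simp only [Pi.add_apply]
    nlinarith

section Main

variable {f f' : ℝ → ℝ} {K : ℝ≥0}

lemma f'_ae_eq_deriv (hf' : ∀ᵐ x ∂(volume : Measure ℝ), HasDerivAt f (f' x) x) :
    f' =ᵐ[(volume : Measure ℝ)] deriv f := by
  filter_upwards [hf'] with x hx
  exact (hx.deriv).symm

lemma integrable_f'_phi (hf : LipschitzWith K f)
    (hf' : ∀ᵐ x ∂(volume : Measure ℝ), HasDerivAt f (f' x) x) :
    Integrable (fun x => f' x * steinPhi x) := by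
  have hae : (fun x => f' x * steinPhi x) =ᵐ[(volume : Measure ℝ)]
      (fun x => deriv f x * steinPhi x) := by
    filter_upwards [f'_ae_eq_deriv hf'] with x hx
    rw [hx]
  refine (Integrable.mono' (integrable_steinPhi.const_mul (K : ℝ)) ?_ ?_)
  · refine AEStronglyMeasurable.congr ?_ hae.symm
    exact ((measurable_deriv f).aestronglyMeasurable.mul
      (by unfold steinPhi; continuity : Continuous steinPhi).aestronglyMeasurable)
  · filter_upwards [hf'] with x hx
    rw [Real.norm_eq_abs, abs_mul, abs_of_nonneg (steinPhi_nonneg x)]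
    exact mul_le_mul_of_nonneg_right (lipschitz_hasDerivAt_bound hf hx) (steinPhi_nonneg x)

lemma integrable_xf_phi (hf : LipschitzWith K f) :
    Integrable (fun x => x * (f x * steinPhi x)) := by
  refine Integrable.mono'
    ((integrable_abs_steinPhi.const_mul (|f 0|)).add
      (integrable_sq_steinPhi.const_mul (K : ℝ))) ?_ ?_
  · exact (continuous_id.mul (hf.continuous.mul
      (by unfold steinPhi; fun_prop))).aestronglyMeasurable
  · filter_upwards with x
    have h1 : |f x| ≤ |f 0| + (K : ℝ) * |x| := lipschitz_linear_growth hf x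
    have h2 : 0 ≤ steinPhi x := steinPhi_nonneg x
    rw [Real.norm_eq_abs, abs_mul, abs_mul, abs_of_nonneg h2]
    simp only [Pi.add_apply]
    have h3 : |x| * (|f x| * steinPhi x) ≤ |x| * ((|f 0| + (K:ℝ) * |x|) * steinPhi x) := by
      apply mul_le_mul_of_nonneg_left _ (abs_nonneg x)
      exact mul_le_mul_of_nonneg_right h1 h2
    have h4 : |x| * ((|f 0| + (K:ℝ) * |x|) * steinPhi x)
        = |f 0| * (|x| * steinPhi x) + (K:ℝ) * (|x| * |x| * steinPhi x) := by ring
    have h5 : |x| * |x| = x ^ 2 := by rw [abs_mul_abs_self, sq]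
    rw [h5] at h4
    linarith
  
lemma integral_psi_zero (hf : LipschitzWith K f)
    (hf' : ∀ᵐ x ∂(volume : Measure ℝ), HasDerivAt f (f' x) x) :
    ∫ x, (f' x * steinPhi x - x * (f x * steinPhi x)) = 0 := by
  set ψ : ℝ → ℝ := fun x => f' x * steinPhi x - x * (f x * steinPhi x) with hψ
  set g : ℝ → ℝ := fun x => f x * steinPhi x with hg
  have hint : Integrable ψ := (integrable_f'_phi hf hf').sub (integrable_xf_phi hf)
  have hd : ∀ᵐ x ∂(volume : Measure ℝ), HasDerivAt g (ψ x) x := by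
    filter_upwards [hf'] with x hx
    have := hx.mul (steinPhi_hasDeriv x)
    refine this.congr_deriv ?_
    rw [hψ]; ring
  -- FTC on [-n, n]
  have key : ∀ n : ℕ, ∫ x in (-(n:ℝ))..(n:ℝ), ψ x = g (n:ℝ) - g (-(n:ℝ)) := by
    intro n
    set c0 : ℝ := (Real.sqrt (2 * Real.pi))⁻¹ with hc0
    have hc0nn : 0 ≤ c0 := inv_nonneg.mpr (Real.sqrt_nonneg _)
    refine ftc_lipschitz_ae (hf.continuous.mul (by unfold steinPhi; fun_prop))
      ((neg_nonpos.mpr (Nat.cast_nonneg n)).trans (Nat.cast_nonneg n))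
      (M := (|f 0| + (K:ℝ) * ((n:ℝ) + 1)) * c0 + c0 * (K:ℝ)) ?_ hd
    intro x hx h hh0 hh1
    have hb1 : |f (x + h)| ≤ |f 0| + (K:ℝ) * ((n:ℝ) + 1) := by
      have := lipschitz_linear_growth hf (x + h)
      have hxh : |x + h| ≤ (n:ℝ) + 1 := by
        rw [abs_le]
        constructor
        · have := hx.1; linarith
        · have := hx.2; linarith
      nlinarith [NNReal.coe_nonneg K]
    have hb2 : |steinPhi (x + h) - steinPhi x| ≤ c0 * h := by
      have h' := steinPhi_lipschitz (x + h) x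
      rwa [add_sub_cancel_left, abs_of_pos hh0] at h'
    have hb3 : |f (x + h) - f x| ≤ (K:ℝ) * h := by
      have := hf.dist_le_mul (x + h) x
      simpa [Real.dist_eq, abs_of_pos hh0] using this
    have hb4 : |steinPhi x| ≤ c0 := by
      rw [abs_of_nonneg (steinPhi_nonneg x)]; exact steinPhi_le x
    have expand : g (x + h) - g x
        = f (x + h) * (steinPhi (x + h) - steinPhi x) + steinPhi x * (f (x + h) - f x) := by
      rw [hg]; ring
    rw [show (f * steinPhi) = g from rfl, expand]
    calc |f (x + h) * (steinPhi (x + h) - steinPhi x) + steinPhi x * (f (x + h) - f x)|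
        ≤ |f (x + h)| * |steinPhi (x + h) - steinPhi x| + |steinPhi x| * |f (x + h) - f x| := by
          refine (abs_add_le _ _).trans ?_
          rw [abs_mul, abs_mul]
      _ ≤ (|f 0| + (K:ℝ) * ((n:ℝ) + 1)) * (c0 * h) + c0 * ((K:ℝ) * h) := by
          refine add_le_add (mul_le_mul hb1 hb2 (abs_nonneg _) (by positivity))
            (mul_le_mul hb4 hb3 (abs_nonneg _) hc0nn)
      _ = ((|f 0| + (K:ℝ) * ((n:ℝ) + 1)) * c0 + c0 * (K:ℝ)) * h := by ring
  have lim1 : Tendsto (fun n : ℕ => ∫ x in (-(n:ℝ))..(n:ℝ), ψ x) atTop (nhds (∫ x, ψ x)) := by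
    refine intervalIntegral_tendsto_integral hint ?_ tendsto_natCast_atTop_atTop
    exact tendsto_neg_atBot_iff.mpr tendsto_natCast_atTop_atTop
  have lim2 : Tendsto (fun n : ℕ => ∫ x in (-(n:ℝ))..(n:ℝ), ψ x) atTop (nhds 0) := by
    rw [funext key]
    exact fphi_tendsto_seq hf
  exact tendsto_nhds_unique lim1 lim2

end Main

lemma integral_gaussianReal_eq (g : ℝ → ℝ) :
    ∫ x, g x ∂(gaussianReal 0 1) = ∫ x, steinPhi x * g x := by
  rw [gaussianReal_of_var_ne_zero 0 one_ne_zero]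
  have hd : (gaussianPDF 0 1) = fun x => ((Real.toNNReal (gaussianPDFReal 0 1 x) : ℝ≥0) : ℝ≥0∞) := by
    ext x
    rw [gaussianPDF]
    rfl
  rw [hd, integral_withDensity_eq_integral_smul
    ((measurable_gaussianPDFReal 0 1).real_toNNReal) g]
  refine integral_congr_ae (Eventually.of_forall fun x => ?_)
  show (gaussianPDFReal 0 1 x).toNNReal • g x = steinPhi x * g x
  rw [NNReal.smul_def, smul_eq_mul, Real.coe_toNNReal _ (gaussianPDFReal_nonneg 0 1 x),
    steinPhi_eq_pdf]


end SteinAux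

/-- Gaussian integration by parts (the "if" direction of Stein's lemma):
if `X ~ N(0,1)` and `f` is Lipschitz with a.e. derivative `f'`, then
`E[f'(X)] = E[X * f(X)]`. -/
theorem stein_lemma_gaussian_integration_by_parts
    {Ω : Type*} [MeasurableSpace Ω] (P : Measure Ω) [IsProbabilityMeasure P]
    (X : Ω → ℝ) (hX : Measurable X)
    (hXgauss : Measure.map X P = gaussianReal 0 1)
    (f f' : ℝ → ℝ) (K : NNReal) (hf : LipschitzWith K f)
    (hf' : ∀ᵐ x ∂(volume : Measure ℝ), HasDerivAt f (f' x) x) :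
    ∫ ω, f' (X ω) ∂P = ∫ ω, X ω * f (X ω) ∂P := by
  have hac : gaussianReal 0 1 ≪ (volume : Measure ℝ) :=
    gaussianReal_absolutelyContinuous 0 one_ne_zero
  have haeg : f' =ᵐ[gaussianReal 0 1] deriv f := (f'_ae_eq_deriv hf').filter_mono hac.ae_le
  have hmf' : AEStronglyMeasurable f' (gaussianReal 0 1) :=
    (measurable_deriv f).aestronglyMeasurable.congr haeg.symm
  have hphic : Continuous steinPhi := by unfold steinPhi; continuity
  have h1 : ∫ ω, f' (X ω) ∂P = ∫ x, f' x ∂(gaussianReal 0 1) := by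
    rw [← hXgauss] at hmf' ⊢
    exact (integral_map hX.aemeasurable hmf').symm
  have h2 : ∫ ω, X ω * f (X ω) ∂P = ∫ x, x * f x ∂(gaussianReal 0 1) := by
    have hm : AEStronglyMeasurable (fun x => x * f x) (Measure.map X P) :=
      (continuous_id.mul hf.continuous).aestronglyMeasurable
    rw [← hXgauss]
    exact (integral_map hX.aemeasurable hm).symm
  rw [h1, h2, integral_gaussianReal_eq, integral_gaussianReal_eq]
  have hz := integral_psi_zero hf hf'
  rw [integral_sub (integrable_f'_phi hf hf') (integrable_xf_phi hf), sub_eq_zero] at hz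
  calc ∫ x, steinPhi x * f' x = ∫ x, f' x * steinPhi x := by
        refine integral_congr_ae (Filter.Eventually.of_forall fun x => ?_); ring
    _ = ∫ x, x * (f x * steinPhi x) := hz
    _ = ∫ x, steinPhi x * (x * f x) := by
        refine integral_congr_ae (Filter.Eventually.of_forall fun x => ?_); ring
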